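/- arXiv:2006.11353 — 4 statements merged into one kernel-verified Lean document; each statement's English description precedes it below -/
import Mathlib

section
/- Every comparability graph has clique chromatic number at most 2. -/
open SimpleGraph

/-- A maximal clique of a simple graph: a clique not properly contained in another clique. -/
def MaxClique {V : Type*} (G : SimpleGraph V) (s : Set V) : Prop :=
  G.IsClique s ∧ ∀ t : Set V, G.IsClique t → s ⊆ t → t = s

/-- A clique colouring: no inclusion-wise maximal clique with at least two vertices
is monochromatic. -/
def CliqueColoring {V α : Type*} (G : SimpleGraph V) (c : V → α) : Prop :=
  ∀ s : Set V, MaxClique G s → (∃ x ∈ s, ∃ y ∈ s, x ≠ y) →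
    ¬ ∃ a : α, ∀ x ∈ s, c x = a

/-- The clique chromatic number: least number of colours in a clique colouring. -/
noncomputable def cliqueChromaticNumber {V : Type*} (G : SimpleGraph V) : ℕ :=
  sInf {n : ℕ | ∃ c : V → Fin n, CliqueColoring G c}

/-- Every comparability graph has clique chromatic number at most 2. -/
theorem stmt1 {X : Type*} [Fintype X] [PartialOrder X] :
    cliqueChromaticNumber (SimpleGraph.fromRel (fun x y : X => x ≤ y)) ≤ 2 := by
  classical
  apply Nat.sInf_le
  refine ⟨fun x => if ∀ z, z ≤ x → z = x then 0 else 1, ?_⟩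
  intro s hs hpair ⟨a, ha⟩
  obtain ⟨x, hx, y, hy, hne⟩ := hpair
  -- s is finite and nonempty; pick a minimal element m
  obtain ⟨m, hm, hmin⟩ : ∃ m ∈ s, ∀ w ∈ s, id w ≤ id m → id m = id w := by
    obtain ⟨m, hm⟩ := (Set.toFinite s).exists_minimalFor id s ⟨x, hx⟩
    exact ⟨m, hm.prop, fun w hw h => le_antisymm (hm.le_of_le hw h) h⟩
  -- m is a least element of s
  have hle : ∀ w ∈ s, m ≤ w := by
    intro w hw
    by_cases hwm : w = m
    · exact le_of_eq hwm.symm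
    · have hadj := hs.1 hm hw (fun h => hwm h.symm)
      rw [SimpleGraph.fromRel_adj] at hadj
      rcases hadj.2 with h | h
      · exact h
      · exact le_of_eq (hmin w hw h)
  -- m is minimal in X
  have hminX : ∀ z, z ≤ m → z = m := by
    intro z hzm
    by_contra hz
    have hzs : z ∉ s := by
      intro hzin
      exact hz (le_antisymm hzm (hle z hzin))
    have hclique : (SimpleGraph.fromRel (fun x y : X => x ≤ y)).IsClique (insert z s) := by
      intro u hu v hv huv
      rw [SimpleGraph.fromRel_adj]
      refine ⟨huv, ?_⟩
      rcases hu with rfl | hu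
      · rcases hv with rfl | hv
        · exact absurd rfl huv
        · exact Or.inl (le_trans hzm (hle v hv))
      · rcases hv with rfl | hv
        · exact Or.inr (le_trans hzm (hle u hu))
        · have := hs.1 hu hv huv
          rw [SimpleGraph.fromRel_adj] at this
          exact this.2
    have := hs.2 _ hclique (Set.subset_insert z s)
    exact hzs (this ▸ Set.mem_insert z s)
  -- pick w ∈ s with w ≠ m
  obtain ⟨w, hw, hwm⟩ : ∃ w ∈ s, w ≠ m := by
    by_cases hxm : x = m
    · exact ⟨y, hy, fun h => hne (hxm.trans h.symm)⟩
    · exact ⟨x, hx, hxm⟩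
  -- w is not minimal in X
  have hwnot : ¬ ∀ z, z ≤ w → z = w := by
    intro h
    exact hwm ((h m (hle w hw)).symm)
  have h1 := ha m hm
  have h2 := ha w hw
  simp only [if_pos hminX] at h1
  simp only [if_neg hwnot] at h2
  exact absurd (h1.trans h2.symm) (by decide)
end

section
/- Every graph on n vertices has clique chromatic number at most 2·⌈√n⌉ + 1. -/
open SimpleGraph

section Aux

variable {V : Type*} [DecidableEq V] (G : SimpleGraph V) [DecidableRel G.Adj]

/-- Greedy proper colouring of a set where all degrees (inside the set) are `< m`,
using the colours `m+1, …, 2m`. -/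
lemma greedy_coloring (m : ℕ) : ∀ W : Finset V,
    (∀ v ∈ W, (W.filter (G.Adj v)).card < m) →
    ∃ c : V → ℕ, (∀ x ∈ W, m + 1 ≤ c x ∧ c x ≤ 2 * m) ∧
      ∀ x ∈ W, ∀ y ∈ W, G.Adj x y → c x ≠ c y := by
  intro W
  induction W using Finset.strongInduction with
  | _ W ih =>
    intro hdeg
    rcases W.eq_empty_or_nonempty with rfl | ⟨u, hu⟩
    · exact ⟨fun _ => 0, by simp, by simp⟩
    · obtain ⟨c, hrange, hproper⟩ := ih (W.erase u) (Finset.erase_ssubset hu)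
        (fun v hv => lt_of_le_of_lt
          (Finset.card_le_card
            (Finset.filter_subset_filter _ (Finset.erase_subset u W)))
          (hdeg v (Finset.mem_of_mem_erase hv)))
      have hcard : ((W.filter (G.Adj u)).image c).card < (Finset.Icc (m+1) (2*m)).card := by
        have h1 : ((W.filter (G.Adj u)).image c).card < m :=
          lt_of_le_of_lt Finset.card_image_le (hdeg u hu)
        have h2 : (Finset.Icc (m+1) (2*m)).card = m := by
          rw [Nat.card_Icc]; omega
        omega
      have hnsub : ¬ Finset.Icc (m+1) (2*m) ⊆ (W.filter (G.Adj u)).image c :=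
        fun h => absurd (Finset.card_le_card h) (by omega)
      obtain ⟨a, haI, hna⟩ := Finset.not_subset.1 hnsub
      rw [Finset.mem_Icc] at haI
      refine ⟨Function.update c u a, ?_, ?_⟩
      · intro x hx
        by_cases hxu : x = u
        · rw [hxu, Function.update_self]; omega
        · rw [Function.update_of_ne hxu]
          exact hrange x (Finset.mem_erase.2 ⟨hxu, hx⟩)
      · intro x hx y hy hadj heq
        by_cases hxu : x = u
        · have hyu : y ≠ u := by
            intro h; rw [hxu, h] at hadj; exact G.irrefl hadj
          rw [hxu, Function.update_self, Function.update_of_ne hyu] at heq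
          have hadj' : G.Adj u y := by rw [hxu] at hadj; exact hadj
          exact hna (Finset.mem_image.2 ⟨y, Finset.mem_filter.2 ⟨hy, hadj'⟩, heq.symm⟩)
        · by_cases hyu : y = u
          · rw [Function.update_of_ne hxu, hyu, Function.update_self] at heq
            have hadj' : G.Adj u x := by rw [hyu] at hadj; exact hadj.symm
            exact hna (Finset.mem_image.2 ⟨x, Finset.mem_filter.2 ⟨hx, hadj'⟩, heq⟩)
          · rw [Function.update_of_ne hxu, Function.update_of_ne hyu] at heq
            exact hproper x (Finset.mem_erase.2 ⟨hxu, hx⟩)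
              y (Finset.mem_erase.2 ⟨hyu, hy⟩) hadj heq

/-- The main iterative construction (Kotlov's argument). -/
lemma build_coloring (m : ℕ) : ∀ W : Finset V, W.card ≤ m * m →
    ∃ (k : ℕ) (c : V → ℕ),
      k * (m + 1) ≤ W.card ∧
      (∀ x ∈ W, c x = 0 ∨ (1 ≤ c x ∧ c x ≤ k) ∨ (m + 1 ≤ c x ∧ c x ≤ 2 * m)) ∧
      (∀ x ∈ W, ∀ y ∈ W, G.Adj x y → c x = c y → 1 ≤ c x ∧ c x ≤ k) ∧
      (∀ a, 1 ≤ a → a ≤ k → ∃ v ∈ W, c v = 0 ∧ ∀ x ∈ W, c x = a → G.Adj v x) := by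
  intro W
  induction W using Finset.strongInduction with
  | _ W ih =>
    intro hWcard
    by_cases hbig : ∃ v ∈ W, m ≤ (W.filter (G.Adj v)).card
    · obtain ⟨v, hvW, hvdeg⟩ := hbig
      set D : Finset V := insert v (W.filter (G.Adj v)) with hD
      have hvD : v ∈ D := Finset.mem_insert_self _ _
      have hDW : D ⊆ W := by
        intro x hx
        rcases Finset.mem_insert.1 hx with rfl | hx
        · exact hvW
        · exact (Finset.mem_filter.1 hx).1
      have hDcard : m + 1 ≤ D.card := by
        have hvnot : v ∉ W.filter (G.Adj v) := by
          simp [Finset.mem_filter]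
        rw [hD, Finset.card_insert_of_notMem hvnot]
        omega
      set W' : Finset V := W \ D with hW'
      have hW'sub : W' ⊂ W := by
        refine Finset.ssubset_iff_of_subset (Finset.sdiff_subset) |>.2 ⟨v, hvW, ?_⟩
        simp [hW', hvD]
      have hW'card : W'.card + (m + 1) ≤ W.card := by
        have h := Finset.card_sdiff_add_card_eq_card hDW
        rw [hW']
        omega
      obtain ⟨k, c, hk, hrange, hedge, hcenter⟩ :=
        ih W' hW'sub (le_trans (le_of_lt (Finset.card_lt_card hW'sub)) hWcard)
      have hk1 : (k + 1) * (m + 1) ≤ W.card := by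
        rw [add_mul]; omega
      have hkm : k + 1 ≤ m := by
        have h1 : (k + 1) * (m + 1) ≤ m * (m + 1) := by
          calc (k + 1) * (m + 1) ≤ W.card := hk1
          _ ≤ m * m := hWcard
          _ ≤ m * (m + 1) := by nlinarith
        exact Nat.le_of_mul_le_mul_right h1 (Nat.succ_pos m)
      set c' : V → ℕ := fun x =>
        if x = v then 0 else if x ∈ W.filter (G.Adj v) then k + 1 else c x with hc'
      have hc'v : c' v = 0 := if_pos rfl
      have hc'filter : ∀ x, x ≠ v → x ∈ W.filter (G.Adj v) → c' x = k + 1 := by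
        intro x h1 h2
        simp only [hc']
        rw [if_neg h1, if_pos h2]
      have hc'other : ∀ x, x ≠ v → x ∉ W.filter (G.Adj v) → c' x = c x := by
        intro x h1 h2
        simp only [hc']
        rw [if_neg h1, if_neg h2]
      have hmemW' : ∀ x ∈ W, x ≠ v → x ∉ W.filter (G.Adj v) → x ∈ W' := by
        intro x hx h1 h2
        rw [hW', Finset.mem_sdiff]
        exact ⟨hx, fun h => by rcases Finset.mem_insert.1 h with h | h
                               · exact h1 h
                               · exact h2 h⟩
      have hc'W' : ∀ x ∈ W', c' x = c x := by
        intro x hx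
        rw [hW', Finset.mem_sdiff] at hx
        have h1 : x ≠ v := fun h => hx.2 (h ▸ hvD)
        have h2 : x ∉ W.filter (G.Adj v) := fun h => hx.2 (Finset.mem_insert_of_mem h)
        exact hc'other x h1 h2
      have hclass : ∀ x ∈ W, c' x = k + 1 → x ∈ W.filter (G.Adj v) := by
        intro x hx hcx
        by_cases h1 : x = v
        · subst h1; rw [hc'v] at hcx; omega
        · by_cases h2 : x ∈ W.filter (G.Adj v)
          · exact h2
          · have hxW' := hmemW' x hx h1 h2
            rw [hc'W' x hxW'] at hcx
            rcases hrange x hxW' with h | h | h <;> omega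
      refine ⟨k + 1, c', hk1, ?_, ?_, ?_⟩
      · intro x hx
        by_cases h1 : x = v
        · left; subst h1; exact hc'v
        · by_cases h2 : x ∈ W.filter (G.Adj v)
          · right; left; rw [hc'filter x h1 h2]; omega
          · rw [hc'other x h1 h2]
            rcases hrange x (hmemW' x hx h1 h2) with h | h | h
            · left; exact h
            · right; left; omega
            · right; right; exact h
      · intro x hx y hy hadj heq
        by_cases h2 : x ∈ W.filter (G.Adj v)
        · have h1 : x ≠ v := by
            intro h; subst h
            exact absurd (Finset.mem_filter.1 h2).2 (G.irrefl)
          rw [hc'filter x h1 h2]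
          omega
        · by_cases h2y : y ∈ W.filter (G.Adj v)
          · have h1 : y ≠ v := by
              intro h; subst h
              exact absurd (Finset.mem_filter.1 h2y).2 (G.irrefl)
            rw [hc'filter y h1 h2y] at heq
            rw [heq]
            omega
          · by_cases h1 : x = v
            · subst h1
              have h1y : y ≠ x := fun h => G.irrefl (h ▸ hadj)
              exact absurd (Finset.mem_filter.2 ⟨hy, hadj⟩) h2y
            · by_cases h1y : y = v
              · subst h1y
                exact absurd (Finset.mem_filter.2 ⟨hx, hadj.symm⟩) h2
              · have hxW' := hmemW' x hx h1 h2
                have hyW' := hmemW' y hy h1y h2y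
                rw [hc'W' x hxW', hc'W' y hyW'] at heq
                rw [hc'W' x hxW']
                have := hedge x hxW' y hyW' hadj heq
                omega
      · intro a ha1 hak
        by_cases hak1 : a = k + 1
        · subst hak1
          refine ⟨v, hvW, hc'v, ?_⟩
          intro x hx hcx
          exact (Finset.mem_filter.1 (hclass x hx hcx)).2
        · have hak' : a ≤ k := by omega
          obtain ⟨w, hwW', hw0, hwadj⟩ := hcenter a ha1 hak'
          refine ⟨w, Finset.mem_sdiff.1 hwW' |>.1, by rw [hc'W' w hwW']; exact hw0, ?_⟩
          intro x hx hcx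
          have h1 : x ≠ v := by
            intro h; subst h; rw [hc'v] at hcx; omega
          have h2 : x ∉ W.filter (G.Adj v) := by
            intro h; rw [hc'filter x h1 h] at hcx; omega
          have hxW' := hmemW' x hx h1 h2
          rw [hc'W' x hxW'] at hcx
          exact hwadj x hxW' hcx
    · push_neg at hbig
      obtain ⟨c, hrange, hproper⟩ := greedy_coloring G m W hbig
      refine ⟨0, c, by omega, ?_, ?_, ?_⟩
      · intro x hx; right; right; exact hrange x hx
      · intro x hx y hy hadj heq
        exact absurd heq (hproper x hx y hy hadj)
      · intro a ha1 ha0; omega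

end Aux

/-- Every graph on `n` vertices has clique chromatic number at most `2⌈√n⌉ + 1`. -/
theorem stmt5 {V : Type*} [Fintype V] (G : SimpleGraph V) :
    cliqueChromaticNumber G ≤
      2 * ⌈Real.sqrt (Fintype.card V)⌉₊ + 1 := by
  classical
  set n := Fintype.card V with hn
  set m := ⌈Real.sqrt n⌉₊ with hm
  have hnm : n ≤ m * m := by
    have h1 : Real.sqrt n ≤ (m : ℝ) := Nat.le_ceil _
    have h2 : (n : ℝ) ≤ (m : ℝ) * (m : ℝ) := by
      have h0 : (0 : ℝ) ≤ Real.sqrt n := Real.sqrt_nonneg _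
      nlinarith [Real.mul_self_sqrt (by positivity : (0:ℝ) ≤ (n:ℝ))]
    exact_mod_cast h2
  have hWcard : (Finset.univ : Finset V).card ≤ m * m := by
    rw [Finset.card_univ]; exact hnm
  obtain ⟨k, c, hk, hrange, hedge, hcenter⟩ := build_coloring G m Finset.univ hWcard
  have hkm : k ≤ m := by
    rcases Nat.eq_zero_or_pos k with rfl | hkpos
    · omega
    · have h1 : k * (m + 1) ≤ m * (m + 1) := by
        calc k * (m + 1) ≤ (Finset.univ : Finset V).card := hk
        _ ≤ m * m := hWcard
        _ ≤ m * (m + 1) := by nlinarith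
      exact Nat.le_of_mul_le_mul_right h1 (Nat.succ_pos m)
  have hbound : ∀ x : V, c x < 2 * m + 1 := by
    intro x
    rcases hrange x (Finset.mem_univ x) with h | h | h <;> omega
  set M := 2 * m + 1 with hM
  set c' : V → Fin M := fun x => ⟨c x % M, Nat.mod_lt _ (by omega)⟩ with hc'
  have hc'val : ∀ x : V, (c' x : ℕ) = c x := by
    intro x
    simp only [hc']
    exact Nat.mod_eq_of_lt (hbound x)
  have hcc : CliqueColoring G c' := by
    intro s hs ⟨x, hx, y, hy, hxy⟩ ⟨a, ha⟩
    have hadj : G.Adj x y := hs.1 hx hy hxy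
    have hceq : c x = c y := by
      have h1 := ha x hx
      have h2 := ha y hy
      have : (c' x : ℕ) = (c' y : ℕ) := by rw [h1, h2]
      rwa [hc'val, hc'val] at this
    obtain ⟨h1, h2⟩ := hedge x (Finset.mem_univ x) y (Finset.mem_univ y) hadj hceq
    obtain ⟨v, _, hv0, hvadj⟩ := hcenter (c x) h1 h2
    have hcs : ∀ b ∈ s, c b = c x := by
      intro b hb
      have : (c' b : ℕ) = (c' x : ℕ) := by rw [ha b hb, ha x hx]
      rwa [hc'val, hc'val] at this
    have hvs : v ∉ s := by
      intro hvs
      have := hcs v hvs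
      omega
    have hclique : G.IsClique (insert v s) := by
      refine hs.1.insert ?_
      intro b hb _
      exact hvadj b (Finset.mem_univ b) (hcs b hb)
    have heq := hs.2 (insert v s) hclique (Set.subset_insert v s)
    exact hvs (heq ▸ Set.mem_insert v s)
  have hmem : M ∈ {n : ℕ | ∃ c : V → Fin n, CliqueColoring G c} := ⟨c', hcc⟩
  calc cliqueChromaticNumber G ≤ M := Nat.sInf_le hmem
  _ = 2 * m + 1 := rfl
end

section
/- If every graph of maximum degree at most D has clique chromatic number at most f(D) for a monotone function f, then every n-vertex graph has clique chromatic number at most ⌈√(n/log n)⌉ + 1 + f(⌈√(n·log n)⌉). In particular, the O(Δ/log Δ) bound for bounded-degree graphs implies the O(√(n/log n)) bound for n-vertex graphs. -/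
open SimpleGraph

section helpers

lemma cliqueColoring_of_injective {V α : Type*} (G : SimpleGraph V) (c : V → α)
    (hc : Function.Injective c) : CliqueColoring G c := by
  rintro s _ ⟨x, hx, y, hy, hxy⟩ ⟨a, ha⟩
  exact hxy (hc ((ha x hx).trans (ha y hy).symm))

lemma exists_coloring_of_le {W : Type*} [Fintype W] (H : SimpleGraph W) (m : ℕ)
    (hle : cliqueChromaticNumber H ≤ m) : ∃ c : W → Fin m, CliqueColoring H c := by
  have hne : (Fintype.card W) ∈ {n : ℕ | ∃ c : W → Fin n, CliqueColoring H c} :=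
    ⟨Fintype.equivFin W, cliqueColoring_of_injective H _ (Fintype.equivFin W).injective⟩
  have hmem := Nat.sInf_mem ⟨_, hne⟩
  obtain ⟨c0, hc0⟩ := hmem
  refine ⟨fun w => Fin.castLE hle (c0 w), ?_⟩
  rintro s hs hdist ⟨a, ha⟩
  obtain ⟨x, hx, -⟩ := id hdist
  refine hc0 s hs hdist ⟨c0 x, fun u hu => ?_⟩
  have := (ha u hu).trans (ha x hx).symm
  exact Fin.castLE_injective hle this

lemma le_cliqueChromatic {V : Type*} (G : SimpleGraph V) (n : ℕ) (c : V → Fin n)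
    (hc : CliqueColoring G c) : cliqueChromaticNumber G ≤ n :=
  Nat.sInf_le ⟨c, hc⟩

lemma steps_le (n t : ℕ) (ht : t * (⌈Real.sqrt ((n : ℝ) * Real.log n)⌉₊ + 2) ≤ n) :
    t ≤ ⌈Real.sqrt ((n : ℝ) / Real.log n)⌉₊ := by
  set M := ⌈Real.sqrt ((n : ℝ) * Real.log n)⌉₊ with hM
  set K := ⌈Real.sqrt ((n : ℝ) / Real.log n)⌉₊ with hK
  rcases le_or_gt n 1 with h1 | h2
  · have : t * 2 ≤ t * (M + 2) := Nat.mul_le_mul_left t (by omega)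
    omega
  · by_contra hlt
    push_neg at hlt
    have hKt : K + 1 ≤ t := hlt
    have hle : (K + 1) * (M + 2) ≤ n := le_trans (Nat.mul_le_mul_right _ hKt) ht
    have hlog : 0 < Real.log n := Real.log_pos (by exact_mod_cast h2)
    have hn0 : (0 : ℝ) < n := by positivity
    set x := Real.sqrt ((n : ℝ) / Real.log n) with hx
    set y := Real.sqrt ((n : ℝ) * Real.log n) with hy
    have hx0 : 0 ≤ x := Real.sqrt_nonneg _
    have hy0 : 0 < y := Real.sqrt_pos.mpr (by positivity)
    have hxy : x * y = n := by
      rw [hx, hy, ← Real.sqrt_mul (by positivity)]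
      rw [show (n : ℝ) / Real.log n * ((n : ℝ) * Real.log n) = (n : ℝ) ^ 2 by
        field_simp]
      exact Real.sqrt_sq (le_of_lt hn0)
    have hxK : x ≤ K := Nat.le_ceil _
    have hyM : y ≤ M := Nat.le_ceil _
    have hcast : ((K : ℝ) + 1) * ((M : ℝ) + 2) ≤ n := by exact_mod_cast hle
    nlinarith [mul_le_mul (le_refl ((K:ℝ)+1)) hyM (le_of_lt hy0) (by positivity : (0:ℝ) ≤ (K:ℝ)+1),
      mul_le_mul hxK (le_refl y) (le_of_lt hy0) (by positivity : (0:ℝ) ≤ (K:ℝ))]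

open Classical in
lemma peel {V : Type} [Fintype V] [DecidableEq V] (G : SimpleGraph V)
    [DecidableRel G.Adj] (M : ℕ) (S : Finset V) :
    ∃ (t : ℕ) (c : V → Option ℕ),
      t * (M + 2) ≤ S.card ∧
      (∀ u ∈ S, ∀ i, c u = some i → i ≤ t) ∧
      (∀ u ∈ S, c u = some 0 → ∀ w ∈ S, G.Adj u w → c w ≠ some 0) ∧
      (∀ i, 1 ≤ i → i ≤ t → ∃ v ∈ S, c v = some 0 ∧ ∀ u ∈ S, c u = some i → G.Adj v u) ∧
      (∀ u ∈ S, c u = none → (S.filter (fun w => c w = none ∧ G.Adj u w)).card ≤ M) := by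
  induction S using Finset.strongInduction with
  | _ S ih =>
    by_cases hv : ∃ v ∈ S, M + 1 ≤ (S.filter (fun w => G.Adj v w)).card
    · obtain ⟨v, hvS, hdeg⟩ := hv
      set Nv := S.filter (fun w => G.Adj v w) with hNv
      set S' := S \ insert v Nv with hS'
      have hvNv : v ∉ Nv := by simp [hNv]
      have hsub : S' ⊂ S := by
        refine (Finset.sdiff_subset).ssubset_of_ne ?_
        intro hEq
        have hv' : v ∈ S \ insert v Nv := by rw [hEq]; exact hvS
        simp at hv'
      obtain ⟨t', c', ha, hb, hc, hd, he⟩ := ih S' hsub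
      have hmemS' : ∀ u, u ∈ S → u ≠ v → u ∉ Nv → u ∈ S' := by
        intro u hu h1 h2; simp [hS', h1, h2, hu]
      have hS'mem : ∀ u, u ∈ S' → u ∈ S ∧ u ≠ v ∧ u ∉ Nv := by
        intro u hu
        simp only [hS', Finset.mem_sdiff, Finset.mem_insert, not_or] at hu
        exact ⟨hu.1, hu.2.1, hu.2.2⟩
      refine ⟨t' + 1, fun u => if u = v then some 0 else if u ∈ Nv then some (t' + 1) else c' u,
        ?_, ?_, ?_, ?_, ?_⟩
      · have hcard : S'.card + (M + 2) ≤ S.card := by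
          have h1 : insert v Nv ⊆ S := by
            intro x hx
            rcases Finset.mem_insert.mp hx with rfl | hx
            · exact hvS
            · exact Finset.mem_of_mem_filter _ hx
          have h2 : (insert v Nv).card = Nv.card + 1 := by
            rw [Finset.card_insert_of_notMem hvNv]
          have h3 : S'.card = S.card - (insert v Nv).card :=
            Finset.card_sdiff_of_subset h1
          have h4 := Finset.card_le_card h1
          omega
        calc (t' + 1) * (M + 2) = t' * (M + 2) + (M + 2) := by ring
        _ ≤ S'.card + (M + 2) := by omega
        _ ≤ S.card := hcard
      · intro u hu i hci
        by_cases h1 : u = v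
        · simp [h1] at hci; omega
        by_cases h2 : u ∈ Nv
        · simp [h1, h2] at hci; omega
        · simp only [h1, h2, if_false] at hci
          exact le_trans (hb u (hmemS' u hu h1 h2) i hci) (by omega)
      · intro u hu hcu w hw hadj
        by_cases h1 : u = v
        · have hwNv : w ∈ Nv := Finset.mem_filter.mpr ⟨hw, h1 ▸ hadj⟩
          have hwv : w ≠ v := by rintro rfl; exact G.irrefl (v := w) (h1 ▸ hadj)
          simp [hwv, hwNv]
        by_cases h2 : u ∈ Nv
        · simp [h1, h2] at hcu
        · simp only [h1, h2, if_false] at hcu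
          have huS' := hmemS' u hu h1 h2
          by_cases h3 : w = v
          · subst h3
            exact absurd (Finset.mem_filter.mpr ⟨hu, G.adj_symm hadj⟩) h2
          by_cases h4 : w ∈ Nv
          · simp [h3, h4]
          · simp only [h3, h4, if_false]
            exact hc u huS' hcu w (hmemS' w hw h3 h4) hadj
      · intro i hi1 hi2
        by_cases hit : i = t' + 1
        · refine ⟨v, hvS, by simp, ?_⟩
          intro u hu hcu
          by_cases h1 : u = v
          · simp [h1, hit] at hcu
          by_cases h2 : u ∈ Nv
          · exact (Finset.mem_filter.mp h2).2
          · simp only [h1, h2, if_false] at hcu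
            have := hb u (hmemS' u hu h1 h2) i hcu
            omega
        · have hit' : i ≤ t' := by omega
          obtain ⟨v', hv'S', hv'c, hv'adj⟩ := hd i hi1 hit'
          obtain ⟨hv'S, hv'v, hv'Nv⟩ := hS'mem v' hv'S'
          refine ⟨v', hv'S, by simp [hv'v, hv'Nv, hv'c], ?_⟩
          intro u hu hcu
          by_cases h1 : u = v
          · simp [h1] at hcu; omega
          by_cases h2 : u ∈ Nv
          · simp [h1, h2] at hcu; omega
          · simp only [h1, h2, if_false] at hcu
            exact hv'adj u (hmemS' u hu h1 h2) hcu
      · intro u hu hcu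
        by_cases h1 : u = v
        · simp [h1] at hcu
        by_cases h2 : u ∈ Nv
        · simp [h1, h2] at hcu
        · simp only [h1, h2, if_false] at hcu
          have huS' := hmemS' u hu h1 h2
          refine le_trans (Finset.card_le_card ?_) (he u huS' hcu)
          intro w hw
          simp only [Finset.mem_filter] at hw ⊢
          obtain ⟨hwS, hwc, hwadj⟩ := hw
          by_cases h3 : w = v
          · simp [h3] at hwc
          by_cases h4 : w ∈ Nv
          · simp [h3, h4] at hwc
          · simp only [h3, h4, if_false] at hwc
            exact ⟨hmemS' w hwS h3 h4, hwc, hwadj⟩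
    · push_neg at hv
      refine ⟨0, fun _ => none, by simp, by simp, by simp, by omega, ?_⟩
      intro u hu _
      have := hv u hu
      refine le_trans (Finset.card_le_card ?_) (by omega : (S.filter (fun w => G.Adj u w)).card ≤ M)
      intro w hw
      simp only [Finset.mem_filter] at hw ⊢
      exact ⟨hw.1, hw.2.2⟩

end helpers

/-- A monotone clique-chromatic bound `f(D)` for graphs of maximum degree at most `D`
implies the bound `⌈√(n/log n)⌉ + 1 + f(⌈√(n log n)⌉)` for `n`-vertex graphs. -/
theorem stmt6 (f : ℕ → ℕ) (hf : Monotone f)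
    (h : ∀ (W : Type) (_ : Fintype W) (H : SimpleGraph W) (_ : DecidableRel H.Adj) (D : ℕ),
        (∀ w : W, H.degree w ≤ D) → cliqueChromaticNumber H ≤ f D)
    (V : Type) [Fintype V] (G : SimpleGraph V) [DecidableRel G.Adj] :
    cliqueChromaticNumber G ≤
      ⌈Real.sqrt ((Fintype.card V : ℝ) / Real.log (Fintype.card V))⌉₊ + 1 +
        f ⌈Real.sqrt ((Fintype.card V : ℝ) * Real.log (Fintype.card V))⌉₊ := by
  classical
  set n := Fintype.card V with hn
  set Mval := ⌈Real.sqrt ((n : ℝ) * Real.log n)⌉₊ with hMval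
  set K := ⌈Real.sqrt ((n : ℝ) / Real.log n)⌉₊ with hKval
  obtain ⟨t, c, ha, hb, hc, hd, he⟩ := peel G Mval Finset.univ
  have hb' : ∀ u : V, ∀ i, c u = some i → i ≤ t := fun u => hb u (Finset.mem_univ u)
  have htK : t ≤ K := steps_le n t (ha.trans_eq Finset.card_univ)
  set Wset : Set V := {u | c u = none} with hWset
  let H := G.induce Wset
  haveI hDec : DecidableRel H.Adj := fun a b =>
    decidable_of_iff (G.Adj a.1 b.1) (by simp [H])
  have hdeg : ∀ w : ↥Wset, H.degree w ≤ Mval := by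
    intro w
    have hw : c w.1 = none := w.2
    have hcard := he w.1 (Finset.mem_univ _) hw
    refine le_trans ?_ hcard
    refine Finset.card_le_card_of_injOn Subtype.val ?_ (Subtype.val_injective.injOn)
    intro u hu
    rw [Finset.mem_coe, SimpleGraph.mem_neighborFinset] at hu
    have hadj : G.Adj w.1 u.1 := hu
    simp only [Finset.mem_coe, Finset.mem_filter, Finset.mem_univ, true_and]
    exact ⟨u.2, hadj⟩
  have hH : cliqueChromaticNumber H ≤ f Mval := h ↥Wset inferInstance H hDec Mval hdeg
  obtain ⟨c'', hc''⟩ := exists_coloring_of_le H (f Mval) hH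
  have hbound : ∀ u : V,
      (if hu : c u = none then K + 1 + ((c'' ⟨u, hu⟩ : Fin (f Mval)) : ℕ) else (c u).getD 0)
        < K + 1 + f Mval := by
    intro u
    by_cases hu : c u = none
    · rw [dif_pos hu]
      have := (c'' ⟨u, hu⟩).isLt
      omega
    · rw [dif_neg hu]
      obtain ⟨i, hi⟩ := Option.ne_none_iff_exists'.mp hu
      have h1 := hb' u i hi
      have h2 : (c u).getD 0 = i := by rw [hi]; rfl
      omega
  set g : V → Fin (K + 1 + f Mval) := fun u =>
    ⟨if hu : c u = none then K + 1 + ((c'' ⟨u, hu⟩ : Fin (f Mval)) : ℕ) else (c u).getD 0,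
      hbound u⟩ with hg
  refine le_cliqueChromatic G _ g ?_
  rintro s ⟨hclique, hmaxl⟩ ⟨x, hx, y, hy, hxy⟩ ⟨a, ha'⟩
  have hgval : ∀ u : V, (g u : ℕ) =
      (if hu : c u = none then K + 1 + ((c'' ⟨u, hu⟩ : Fin (f Mval)) : ℕ) else (c u).getD 0) :=
    fun u => rfl
  have haval : ∀ u ∈ s, (g u : ℕ) = (a : ℕ) := fun u hu => by rw [ha' u hu]
  rcases hcx : c x with _ | i
  · -- x is in the low-degree remainder
    have hxval : (a : ℕ) = K + 1 + ((c'' ⟨x, hcx⟩ : Fin (f Mval)) : ℕ) := by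
      rw [← haval x hx, hgval x, dif_pos hcx]
    have hsubW : ∀ u ∈ s, c u = none := by
      intro u hu
      by_contra hne
      obtain ⟨i, hi⟩ := Option.ne_none_iff_exists'.mp hne
      have h1 := hb' u i hi
      have h2 : (g u : ℕ) = i := by rw [hgval u, dif_neg (by simp [hi]), hi]; rfl
      have h3 := haval u hu
      omega
    set s' : Set ↥Wset := Subtype.val ⁻¹' s with hs'
    have hclique' : H.IsClique s' := by
      intro u hu w hw hne
      have : G.Adj u.1 w.1 := hclique hu hw (fun hh => hne (Subtype.ext hh))
      exact this
    have hmax' : MaxClique H s' := by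
      refine ⟨hclique', ?_⟩
      intro t' ht' hsubt'
      have himgclique : G.IsClique (Subtype.val '' t') := by
        rintro a1 ⟨u, hu, rfl⟩ b1 ⟨w, hw, rfl⟩ hab
        have : H.Adj u w := ht' hu hw (fun hh => hab (congrArg Subtype.val hh))
        exact this
      have hsimg : s ⊆ Subtype.val '' t' := by
        intro u hu
        exact ⟨⟨u, hsubW u hu⟩, hsubt' hu, rfl⟩
      have himg : Subtype.val '' t' = s := hmaxl _ himgclique hsimg
      apply Set.Subset.antisymm
      · intro u hu
        have : u.1 ∈ s := by rw [← himg]; exact ⟨u, hu, rfl⟩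
        exact this
      · exact hsubt'
    have hdist' : ∃ x' ∈ s', ∃ y' ∈ s', x' ≠ y' :=
      ⟨⟨x, hsubW x hx⟩, hx, ⟨y, hsubW y hy⟩, hy, fun hh => hxy (congrArg Subtype.val hh)⟩
    refine hc'' s' hmax' hdist' ⟨c'' ⟨x, hcx⟩, ?_⟩
    intro u hu
    have h1 : (g u.1 : ℕ) = (a : ℕ) := haval u.1 hu
    have h2 : c u.1 = none := u.2
    rw [hgval u.1, dif_pos h2] at h1
    have h3 : ((c'' ⟨u.1, h2⟩ : Fin (f Mval)) : ℕ) = ((c'' ⟨x, hcx⟩ : Fin (f Mval)) : ℕ) := by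
      omega
    have h4 : (⟨u.1, h2⟩ : ↥Wset) = u := Subtype.ext rfl
    rw [← h4]
    exact Fin.ext h3
  · -- x has colour some i
    have hival : i = (a : ℕ) := by
      have := haval x hx
      rw [hgval x, dif_neg (by simp [hcx]), hcx] at this
      exact this
    have hit : i ≤ t := hb' x i hcx
    have hsome : ∀ u ∈ s, c u = some i := by
      intro u hu
      rcases hcu : c u with _ | j
      · have h1 := haval u hu
        rw [hgval u, dif_pos hcu] at h1
        omega
      · have h1 := haval u hu
        rw [hgval u, dif_neg (by simp [hcu]), hcu] at h1
        have : j = i := by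
          have : ((some j).getD 0 : ℕ) = j := rfl
          omega
        rw [this]
    rcases Nat.eq_zero_or_pos i with hi0 | hi1
    · subst hi0
      have hadjxy : G.Adj x y := hclique hx hy hxy
      exact hc x (Finset.mem_univ x) hcx y (Finset.mem_univ y) hadjxy (hsome y hy)
    · obtain ⟨v, -, hv0, hvadj⟩ := hd i hi1 hit
      have hvs : v ∉ s := by
        intro hvs
        have := hsome v hvs
        rw [hv0] at this
        simp at this
        omega
      have hins : G.IsClique (insert v s) := by
        refine hclique.insert ?_
        intro b hb hbne
        exact hvadj b (Finset.mem_univ b) (hsome b hb)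
      have := hmaxl (insert v s) hins (Set.subset_insert v s)
      rw [← this] at hvs
      exact hvs (Set.mem_insert v s)
end

section
/- Let G be a graph, v a vertex of G, and σ a partial colouring of G (with some vertices possibly uncoloured, i.e., Blank) such that no maximal clique of size at least two is monochromatic in a non-Blank colour. Suppose each vertex u ∈ N(v) is recoloured with a colour that does not appear (under the new colouring) on any neighbour of u outside N(v), or with Blank, while vertices outside N(v) keep their colours. Then in the resulting partial colouring, no maximal clique of size at least two is monochromatic in a non-Blank colour. -/
open SimpleGraph

/-- Recolouring the neighbourhood of `v`, giving each `u ∈ N(v)` either Blank (`none`)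
or a colour not appearing on its neighbours outside `N(v)`, preserves the property
that no maximal clique of size at least two is monochromatic in a non-Blank colour. -/
theorem stmt7 {V : Type*} (G : SimpleGraph V) (v : V) (σ τ : V → Option ℕ)
    (hσ : ∀ s : Set V, MaxClique G s → (∃ x ∈ s, ∃ y ∈ s, x ≠ y) →
      ¬ ∃ c : ℕ, ∀ x ∈ s, σ x = some c)
    (hkeep : ∀ u : V, ¬ G.Adj v u → τ u = σ u)
    (hnew : ∀ u : V, G.Adj v u →
      τ u = none ∨ ∀ w : V, G.Adj u w → ¬ G.Adj v w → τ w ≠ τ u) :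
    ∀ s : Set V, MaxClique G s → (∃ x ∈ s, ∃ y ∈ s, x ≠ y) →
      ¬ ∃ c : ℕ, ∀ x ∈ s, τ x = some c := by
  rintro s ⟨hcl, hmax⟩ hsize ⟨c, hc⟩
  by_cases hsub : ∀ x ∈ s, G.Adj v x
  · -- s ∪ {v} is a clique strictly containing s
    have hv : v ∉ s := fun hv => G.loopless.irrefl v (hsub v hv)
    have hclique : G.IsClique (insert v s) := by
      intro x hx y hy hxy
      rcases hx with rfl | hx
      · rcases hy with rfl | hy
        · exact absurd rfl hxy
        · exact hsub y hy
      · rcases hy with rfl | hy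
        · exact (hsub x hx).symm
        · exact hcl hx hy hxy
    have := hmax _ hclique (Set.subset_insert v s)
    exact hv (this ▸ Set.mem_insert v s)
  · push_neg at hsub
    obtain ⟨w, hws, hwv⟩ := hsub
    by_cases hall : ∀ x ∈ s, ¬ G.Adj v x
    · exact hσ s ⟨hcl, hmax⟩ hsize ⟨c, fun x hx => (hkeep x (hall x hx)).symm.trans (hc x hx)⟩
    · push_neg at hall
      obtain ⟨u, hus, huv⟩ := hall
      rcases hnew u huv with h0 | hns
      · rw [hc u hus] at h0; exact Option.some_ne_none c h0
      · have huw : u ≠ w := fun h => hwv (h ▸ huv)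
        exact hns w (hcl hus hws huw) hwv ((hc w hws).trans (hc u hus).symm)
end
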